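/- For every integer a > 1 and every integer r > 2 with (a, r) ≠ (2, 6), there exists a prime p such that p divides a^r - 1 but p does not divide a^k - 1 for any integer k with 1 ≤ k < r. -/

import Mathlib

open Polynomial

lemma zsig_two_pow {q : ℕ} (hq : 5 ≤ q) : 3 * q + 1 ≤ 2 ^ q := by
  induction q with
  | zero => omega
  | succ n ih =>
    rcases Nat.lt_or_ge n 5 with h | h
    · interval_cases n <;> simp_all
    · have := ih (by omega)
      have h2 : 2 ^ n ≥ 16 := by calc (16:ℕ) = 2^4 := by norm_num
                                     _ ≤ 2^n := Nat.pow_le_pow_right (by norm_num) (by omega)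
      rw [pow_succ]; omega

lemma zsig_cyclo_pow_eval {q n : ℕ} (hq : q.Prime) (hn : q ∣ n) (j : ℕ) (x : ℤ) :
    (cyclotomic (q ^ j * n) ℤ).eval x = (cyclotomic n ℤ).eval (x ^ q ^ j) := by
  induction j generalizing x with
  | zero => simp
  | succ i ih =>
    have h1 : q ^ (i+1) * n = (q ^ i * n) * q := by ring
    rw [h1, ← cyclotomic_expand_eq_cyclotomic hq (Dvd.dvd.mul_left hn _), expand_eval, ih,
      ← pow_mul, pow_succ']

lemma zsig_order {a r q : ℕ} (hq : q.Prime) (hr : 0 < r)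
    (hdvd : (q : ℤ) ∣ (cyclotomic r ℤ).eval (a : ℤ)) :
    IsPrimitiveRoot ((a : ℕ) : ZMod q) (r / q ^ r.factorization q) := by
  haveI : Fact q.Prime := ⟨hq⟩
  have hqm : ¬ q ∣ (r / q ^ r.factorization q) := Nat.not_dvd_ordCompl hq hr.ne'
  haveI : NeZero (((r / q ^ r.factorization q) : ℕ) : ZMod q) :=
    ⟨by rwa [Ne, ZMod.natCast_eq_zero_iff]⟩
  have hroot : (cyclotomic r (ZMod q)).IsRoot ((a : ℕ) : ZMod q) := by
    have h0 : (((cyclotomic r ℤ).eval (a : ℤ) : ℤ) : ZMod q) = 0 :=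
      (ZMod.intCast_zmod_eq_zero_iff_dvd _ q).mpr hdvd
    have h1 := cyclotomic.eval_apply (a : ℤ) r (Int.castRingHom (ZMod q))
    simp only [Int.coe_castRingHom] at h1
    rw [IsRoot.def]
    rw [show (((a : ℕ)) : ZMod q) = (((a:ℕ) : ℤ) : ZMod q) by push_cast; ring]
    rw [h1, h0]
  rw [← Nat.ordProj_mul_ordCompl_eq_self r q] at hroot
  exact (isRoot_cyclotomic_prime_pow_mul_iff_of_charP).mp hroot

set_option maxHeartbeats 1000000 in
/-- Zsigmondy's theorem for `r > 2`. -/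
theorem stmt_2 (a r : ℕ) (ha : 1 < a) (hr : 2 < r) (h : (a, r) ≠ (2, 6)) :
    ∃ p : ℕ, p.Prime ∧ p ∣ a ^ r - 1 ∧ ∀ k : ℕ, 1 ≤ k → k < r → ¬ p ∣ a ^ k - 1 := by
  by_contra hcon
  push_neg at hcon
  set E : ℤ := (cyclotomic r ℤ).eval (a : ℤ) with hE
  set N : ℕ := E.natAbs with hN
  have hr0 : 0 < r := by omega
  have hr1 : 1 < r := by omega
  have hEpos : 0 < E := cyclotomic_pos' r (by exact_mod_cast ha)
  have hNE : (N : ℤ) = E := Int.natAbs_of_nonneg hEpos.le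
  have hN1 : 1 < N := by
    have := sub_one_lt_natAbs_cyclotomic_eval hr1 (show a ≠ 1 by omega)
    omega
  have hdvdZ : E ∣ (a : ℤ) ^ r - 1 := by
    have := eval_dvd (x := (a : ℤ)) (cyclotomic.dvd_X_pow_sub_one r ℤ)
    simpa using this
  have hpow1 : 1 ≤ a ^ r := Nat.one_le_pow _ _ (by omega)
  have hcast : ((a ^ r - 1 : ℕ) : ℤ) = (a : ℤ) ^ r - 1 := by
    rw [Nat.cast_sub hpow1]; push_cast; ring
  have hNdvd : N ∣ a ^ r - 1 := by
    rw [← Int.natCast_dvd_natCast, hcast, hNE]; exact hdvdZ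
  -- key facts for every prime divisor of N
  have key : ∀ q : ℕ, q.Prime → q ∣ N →
      ¬ q ∣ a ∧ 1 ≤ r.factorization q ∧
      orderOf ((a:ℕ) : ZMod q) = r / q ^ r.factorization q ∧
      (r / q ^ r.factorization q) ∣ q - 1 := by
    intro q hq hqN
    haveI : Fact q.Prime := ⟨hq⟩
    have hqE : (q : ℤ) ∣ E := by
      rw [← hNE]; exact_mod_cast hqN
    have hprim := zsig_order hq hr0 hqE
    have hord : orderOf ((a:ℕ) : ZMod q) = r / q ^ r.factorization q := hprim.eq_orderOf.symm
    have hqar : q ∣ a ^ r - 1 := dvd_trans hqN hNdvd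
    have hqa : ¬ q ∣ a := by
      intro hd
      have h2 : q ∣ a ^ r := hd.trans (dvd_pow_self a hr0.ne')
      have h3 := Nat.dvd_sub h2 hqar
      rw [Nat.sub_sub_self hpow1] at h3
      exact absurd (Nat.dvd_one.mp h3) hq.one_lt.ne'
    have hane : ((a:ℕ) : ZMod q) ≠ 0 := by
      rwa [Ne, ZMod.natCast_eq_zero_iff]
    have hmq : (r / q ^ r.factorization q) ∣ q - 1 := by
      rw [← hord]; exact ZMod.orderOf_dvd_card_sub_one hane
    obtain ⟨k, hk1, hkr, hkd⟩ := hcon q hq hqar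
    have hmk : (r / q ^ r.factorization q) ∣ k := by
      rw [← hord]
      apply orderOf_dvd_of_pow_eq_one
      have h2 : 1 ≤ a ^ k := Nat.one_le_pow _ _ (by omega)
      have h1 : ((a ^ k - 1 : ℕ) : ZMod q) = 0 := (ZMod.natCast_eq_zero_iff _ _).mpr hkd
      rw [Nat.cast_sub h2] at h1
      push_cast at h1
      linear_combination h1
    have hmr : r / q ^ r.factorization q < r :=
      lt_of_le_of_lt (Nat.le_of_dvd (by omega) hmk) hkr
    have hv : 1 ≤ r.factorization q := by
      by_contra hv0
      have h0 : r.factorization q = 0 := by omega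
      rw [h0, pow_zero, Nat.div_one] at hmr
      omega
    exact ⟨hqa, hv, hord, hmq⟩
  have hmpos : ∀ q : ℕ, 0 < r / q ^ r.factorization q := fun q => Nat.ordCompl_pos q hr0.ne'
  have hmlt : ∀ q : ℕ, q.Prime → q ∣ N → r / q ^ r.factorization q < q := by
    intro q hq hqN
    obtain ⟨-, -, -, hmq⟩ := key q hq hqN
    have h1 := Nat.le_of_dvd (by have := hq.two_le; omega) hmq
    have h2 := hq.two_le
    omega
  have huniq : ∀ q₁ q₂ : ℕ, q₁.Prime → q₂.Prime → q₁ ∣ N → q₂ ∣ N → q₁ = q₂ := by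
    have hlt : ∀ q₁ q₂ : ℕ, q₁.Prime → q₂.Prime → q₁ ∣ N → q₂ ∣ N → q₁ ≠ q₂ → q₁ < q₂ := by
      intro q₁ q₂ h1 h2 hd1 hd2 hne
      obtain ⟨-, hv1, -, -⟩ := key q₁ h1 hd1
      have hq1r : q₁ ∣ r := Nat.dvd_of_factorization_pos (by omega)
      have hsplit : q₁ ∣ q₂ ^ (r.factorization q₂) * (r / q₂ ^ r.factorization q₂) := by
        rw [Nat.ordProj_mul_ordCompl_eq_self]; exact hq1r
      rcases (Nat.Prime.dvd_mul h1).mp hsplit with hcase | hcase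
      · exact absurd ((Nat.prime_dvd_prime_iff_eq h1 h2).mp (h1.dvd_of_dvd_pow hcase)) hne
      · exact lt_of_le_of_lt (Nat.le_of_dvd (hmpos q₂) hcase) (hmlt q₂ h2 hd2)
    intro q₁ q₂ h1 h2 d1 d2
    by_contra hne
    have := hlt q₁ q₂ h1 h2 d1 d2 hne
    have := hlt q₂ q₁ h2 h1 d2 d1 (Ne.symm hne)
    omega
  set q := N.minFac with hqdef
  have hq : q.Prime := Nat.minFac_prime (by omega)
  haveI : Fact q.Prime := ⟨hq⟩
  have hqN : q ∣ N := Nat.minFac_dvd N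
  obtain ⟨hqa, hv, hord, hmq⟩ := key q hq hqN
  set v := r.factorization q with hvdef
  set m := r / q ^ v with hmdef
  have hqr : q ∣ r := Nat.dvd_of_factorization_pos (by omega)
  have hrqm : q ^ v * m = r := Nat.ordProj_mul_ordCompl_eq_self r q
  have hm0 : 0 < m := hmpos q
  have hmltq : m < q := hmlt q hq hqN
  -- q^2 does not divide N
  have hrq_eq : r / q = q ^ (v-1) * m := by
    have h1 : r = q * (q ^ (v-1) * m) := by
      rw [← hrqm, ← mul_assoc, ← pow_succ']
      congr 2
      omega
    rw [h1, Nat.mul_div_cancel_left _ hq.pos]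
  set b : ℤ := (a:ℤ) ^ (r / q) with hbdef
  have hrq1 : 1 ≤ r / q := Nat.one_le_div_iff hq.pos |>.mpr (Nat.le_of_dvd hr0 hqr)
  have hapow1 : ∀ j : ℕ, 1 ≤ j → (1:ℤ) < (a:ℤ) ^ j := fun j hj =>
    one_lt_pow₀ (by exact_mod_cast ha) (by omega)
  have hqb : (q:ℤ) ∣ b - 1 := by
    have h1 : (((a:ℕ)) : ZMod q) ^ (r / q) = 1 := by
      apply orderOf_dvd_iff_pow_eq_one.mp
      rw [hord, hrq_eq]
      exact dvd_mul_left m _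
    have h2 : ((b - 1 : ℤ) : ZMod q) = 0 := by
      push_cast [hbdef]
      rw [h1]; ring
    exact (ZMod.intCast_zmod_eq_zero_iff_dvd _ _).mp h2
  have hbne : b - 1 ≠ 0 := by
    have := hapow1 (r/q) hrq1
    rw [hbdef]; omega
  set S : ℤ := ∑ i ∈ Finset.range q, b ^ i with hSdef
  have hSb : S * (b - 1) = (a:ℤ)^r - 1 := by
    rw [hSdef, geom_sum_mul, hbdef, ← pow_mul, Nat.div_mul_cancel hqr]
  have hES : E ∣ S := by
    have hd : r / q ∈ r.properDivisors :=
      Nat.mem_properDivisors.mpr ⟨Nat.div_dvd_of_dvd hqr, Nat.div_lt_self hr0 hq.one_lt⟩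
    have h1 := eval_dvd (x := (a:ℤ)) (X_pow_sub_one_mul_cyclotomic_dvd_X_pow_sub_one_of_dvd ℤ hd)
    simp only [eval_mul, eval_sub, eval_pow, eval_X, eval_one] at h1
    rw [← hSb, ← hbdef, mul_comm S] at h1
    exact (mul_dvd_mul_iff_left hbne).mp h1
  have hqbnd : ¬ (q:ℤ) ∣ b := by
    intro hd
    have h1 : (q:ℤ) ∣ (a:ℤ) := (Nat.prime_iff_prime_int.mp hq).dvd_of_dvd_pow hd
    exact hqa (by exact_mod_cast h1)
  have hq2S : ¬ (q:ℤ)^2 ∣ S := by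
    rcases hq.eq_two_or_odd' with hq2 | hqodd
    · -- q = 2 : then m = 1, r = 2^v, v ≥ 2
      have hm1 : m = 1 := by
        have h' := hmq
        rw [hq2] at h'
        simpa using h'
      have hv2 : 2 ≤ v := by
        by_contra hc
        have hv1 : v = 1 := by omega
        rw [hq2, hv1, pow_one, hm1, mul_one] at hrqm
        omega
      have haoddn : ¬ 2 ∣ a := by rw [← hq2]; exact hqa
      have haZ : Odd (a:ℤ) := by
        have h2 : a % 2 = 1 := by omega
        exact ⟨(a:ℤ)/2, by omega⟩
      have hb' : b = ((a:ℤ)^(2^(v-2)))^2 := by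
        rw [hbdef, ← pow_mul, hrq_eq, hm1, mul_one, hq2]
        congr 1
        rw [← pow_succ]
        congr 1
        omega
      have hmod : b % 4 = 1 := by
        rw [hb']
        apply Int.sq_mod_four_eq_one_of_odd
        exact haZ.pow
      intro hdvd
      have hS2 : S = 1 + b := by rw [hSdef, hq2]; simp [Finset.sum_range_succ]
      rw [hS2, hq2] at hdvd
      norm_num at hdvd
      omega
    · have hmul := emultiplicity_geom_sum₂_eq_one (R := ℤ) (x := b) (y := 1)
        (Nat.prime_iff_prime_int.mp hq) hqodd (by simpa using hqb) hqbnd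
      simp only [one_pow, mul_one] at hmul
      intro h2
      rw [← Nat.cast_one] at hmul
      obtain ⟨-, hnd⟩ := emultiplicity_eq_coe.mp hmul
      exact hnd (by simpa [hSdef] using h2)
  have hq2N : ¬ q^2 ∣ N := by
    intro hc
    apply hq2S
    refine dvd_trans ?_ hES
    rw [← hNE]
    exact_mod_cast hc
  have hNq : N = q := by
    have hNpow := Nat.eq_prime_pow_of_unique_prime_dvd (p := q) (by omega)
      (fun {d} hd hdN => huniq d q hd hq hdN hqN)
    set L := N.primeFactorsList.length
    have hL1 : L ≠ 0 := by
      intro h0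
      rw [h0, pow_zero] at hNpow
      omega
    have hL2 : L < 2 := by
      by_contra hc
      exact hq2N (hNpow ▸ pow_dvd_pow q (by omega))
    rw [hNpow, show L = 1 by omega, pow_one]
  -- size contradiction
  have hq2le : 2 ≤ q := hq.two_le
  have hqt : q - 1 ≤ r.totient := by
    have h1 : q.totient ∣ r.totient := Nat.totient_dvd_of_dvd hqr
    rw [Nat.totient_prime hq] at h1
    exact Nat.le_of_dvd (Nat.totient_pos.mpr hr0) h1
  have hqpow : q ≤ 2 ^ (q - 1) := by
    have := Nat.lt_two_pow_self (n := q-1)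
    omega
  rcases Nat.lt_or_ge a 3 with ha2 | ha3
  · -- a = 2
    have ha2' : a = 2 := by omega
    subst ha2'
    have hqodd : Odd q := by
      rcases hq.eq_two_or_odd' with h2 | hodd
      · exact absurd (dvd_refl 2) (h2 ▸ hqa)
      · exact hodd
    have hq3 : 3 ≤ q := by
      rcases hqodd with ⟨t, ht⟩
      omega
    have hq2m : q ∣ 2 ^ m - 1 := by
      have h1 : (2 : ZMod q) ^ m = 1 := by
        have h1' := pow_orderOf_eq_one (((2:ℕ)) : ZMod q)
        rw [hord] at h1'
        push_cast at h1'
        exact h1'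
      have h2 : ((2 ^ m - 1 : ℕ) : ZMod q) = 0 := by
        rw [Nat.cast_sub (Nat.one_le_two_pow)]
        push_cast
        rw [h1]; ring
      exact (ZMod.natCast_eq_zero_iff _ _).mp h2
    have hm2 : 2 ≤ m := by
      by_contra hc
      have hm1 : m = 1 := by omega
      rw [hm1] at hq2m
      norm_num at hq2m
      omega
    rcases Nat.lt_or_ge v 2 with hv1 | hv2
    · -- v = 1
      have hv1' : v = 1 := by omega
      have hrm : r = q * m := by rw [← hrqm, hv1', pow_one]
      rcases Nat.eq_or_lt_of_le hm2 with hm2' | hm3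
      · -- m = 2, q = 3, r = 6 : the excluded case
        rw [← hm2'] at hq2m
        norm_num at hq2m
        have hq3' : q = 3 := (Nat.prime_dvd_prime_iff_eq hq (by norm_num)).mp hq2m
        apply h
        rw [hrm, hq3', ← hm2']
      · -- m ≥ 3
        have hm3' : 3 ≤ m := hm3
        have hq5 : 5 ≤ q := by
          have hle : m ≤ q - 1 := Nat.le_of_dvd (by omega) hmq
          have : q ≠ 4 := fun hc => by rw [hc] at hq; norm_num at hq
          omega
        have hqnm : ¬ q ∣ m := fun hd => by
          have := Nat.le_of_dvd hm0 hd; omega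
        have hid := cyclotomic_expand_eq_cyclotomic_mul hq hqnm ℤ
        have hidev := congrArg (Polynomial.eval ((2:ℕ):ℤ)) hid
        rw [expand_eval, eval_mul, mul_comm m q, ← hrm] at hidev
        have hEq : E = (q:ℤ) := by rw [← hNE, hNq]
        rw [← hE, hEq] at hidev
        -- hidev : (cyclotomic m ℤ).eval (2^q) = q * (cyclotomic m ℤ).eval 2
        push_cast at hidev
        set t := m.totient with htdef
        have ht2 : 2 ≤ t := by
          have he : Even t := Nat.totient_even (by omega)
          have hp : 0 < t := Nat.totient_pos.mpr (by omega)
          rcases he with ⟨s, hs⟩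
          omega
        have hA : (cyclotomic m ℝ).eval ((2:ℝ)^q) = (((cyclotomic m ℤ).eval ((2:ℤ)^q) : ℤ) : ℝ) := by
          have h0 := cyclotomic.eval_apply ((2:ℤ)^q) m (Int.castRingHom ℝ)
          simpa using h0
        have hB : (cyclotomic m ℝ).eval (2:ℝ) = (((cyclotomic m ℤ).eval (2:ℤ) : ℤ) : ℝ) := by
          have h0 := cyclotomic.eval_apply (2:ℤ) m (Int.castRingHom ℝ)
          simpa using h0
        have hlow := sub_one_pow_totient_lt_cyclotomic_eval (n := m) (q := (2:ℝ)^q)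
          (by omega) (one_lt_pow₀ one_lt_two (by omega))
        have hup := cyclotomic_eval_lt_add_one_pow_totient (n := m) (q := (2:ℝ))
          (by omega) one_lt_two
        have hqR : (0:ℝ) < (q:ℝ) := by positivity
        have hAB : (cyclotomic m ℝ).eval ((2:ℝ)^q) = (q:ℝ) * (cyclotomic m ℝ).eval 2 := by
          rw [hA, hB, hidev]; push_cast; ring
        have hfinalR : ((2:ℝ)^q - 1) ^ t < (q:ℝ) * 3 ^ t := by
          calc ((2:ℝ)^q - 1) ^ t < (cyclotomic m ℝ).eval ((2:ℝ)^q) := hlow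
          _ = (q:ℝ) * (cyclotomic m ℝ).eval 2 := hAB
          _ < (q:ℝ) * (2+1) ^ t := mul_lt_mul_of_pos_left hup hqR
          _ = (q:ℝ) * 3 ^ t := by norm_num
        have h12q : 1 ≤ 2^q := Nat.one_le_two_pow
        have hcast3 : (((2^q - 1 : ℕ)) : ℝ) = (2:ℝ)^q - 1 := by
          rw [Nat.cast_sub h12q]; push_cast; ring
        have hnat : (2^q - 1 : ℕ) ^ t < q * 3 ^ t := by
          rw [← hcast3] at hfinalR
          exact_mod_cast hfinalR
        have h3q : 3 * q ≤ 2^q - 1 := by have := zsig_two_pow hq5; omega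
        have h3tpos : 0 < 3 ^ t := Nat.pow_pos (n := t) (by norm_num)
        have hbig : q * 3 ^ t < (2^q - 1)^t := by
          calc q * 3^t < q^2 * 3^t := by
                have hqq : q < q^2 := by
                  have h2 := hq.two_le
                  calc q = q^1 := (pow_one q).symm
                  _ < q^2 := Nat.pow_lt_pow_right hq.one_lt (by omega)
                exact mul_lt_mul_of_pos_right hqq h3tpos
          _ ≤ q^t * 3^t := Nat.mul_le_mul_right _ (Nat.pow_le_pow_right (by omega) ht2)
          _ = (3*q)^t := by rw [mul_pow]; ring
          _ ≤ (2^q - 1)^t := Nat.pow_le_pow_left h3q _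
        omega
    · -- v ≥ 2
      have hrform : r = q ^ (v-1) * (q * m) := by
        rw [← hrqm, ← mul_assoc, ← pow_succ]
        congr 2
        omega
      have heval := zsig_cyclo_pow_eval hq (dvd_mul_right q m) (v-1) ((2:ℕ):ℤ)
      rw [← hrform] at heval
      set Q : ℕ := 2 ^ (q ^ (v-1)) with hQdef
      have hcast2 : (((2:ℕ):ℤ))^(q^(v-1)) = ((Q:ℕ):ℤ) := by push_cast [hQdef]; ring
      have hQ8 : 8 ≤ Q := by
        rw [hQdef]
        calc (8:ℕ) = 2 ^ 3 := by norm_num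
        _ ≤ 2 ^ q := Nat.pow_le_pow_right (by norm_num) hq3
        _ ≤ 2 ^ (q ^ (v-1)) := Nat.pow_le_pow_right (by norm_num)
            (by calc q = q ^ 1 := (pow_one q).symm
                _ ≤ q ^ (v-1) := Nat.pow_le_pow_right (by omega) (by omega))
      have hlt := sub_one_pow_totient_lt_natAbs_cyclotomic_eval (n := q*m) (q := Q)
        (by nlinarith) (by omega)
      rw [← hcast2, ← heval, ← hE, ← hN, hNq] at hlt
      -- hlt : (Q - 1) ^ (q*m).totient < q
      have hqt2 : q - 1 ≤ (q*m).totient := by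
        have h1 : q.totient ∣ (q*m).totient := Nat.totient_dvd_of_dvd (dvd_mul_right q m)
        rw [Nat.totient_prime hq] at h1
        exact Nat.le_of_dvd (Nat.totient_pos.mpr (by positivity)) h1
      have hchain : q ≤ (Q - 1) ^ (q*m).totient := by
        calc q ≤ 2 ^ (q-1) := hqpow
        _ ≤ (Q-1) ^ (q-1) := Nat.pow_le_pow_left (by omega) _
        _ ≤ (Q-1) ^ ((q*m).totient) := Nat.pow_le_pow_right (by omega) hqt2
      omega
  · -- a ≥ 3
    have h1 : (a - 1)^(r.totient) < N :=
      sub_one_pow_totient_lt_natAbs_cyclotomic_eval hr1 (by omega)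
    have hchain : q ≤ (a-1) ^ r.totient := by
      calc q ≤ 2 ^ (q-1) := hqpow
      _ ≤ 2 ^ r.totient := Nat.pow_le_pow_right (by norm_num) hqt
      _ ≤ (a-1) ^ r.totient := Nat.pow_le_pow_left (by omega) _
    omega
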